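/- Negative feedback interconnection of a passive system through a positive semidefinite coupling preserves the dissipation inequality: if (A_b,B_b,C_b,D_b) is passive with storage matrix Ξ, S ⪰ 0, I + D_bS is invertible, and the interconnected system matrices are A_c = A_b − B_b(I+SD_b)⁻¹SC_b, B_c = B_b(I+SD_b)⁻¹ℬ, C_c = ℬᵀ(I+D_bS)⁻¹C_b, D_c = ℬᵀD_b(I+SD_b)⁻¹ℬ, then for all x and u_c: 2xᵀΞ(A_cx + B_cu_c) ≤ 2(C_cx + D_cu_c)ᵀu_c. -/

import Mathlib

open Matrix

def NegSemidef {m : Type*} [Fintype m] (M : Matrix m m ℝ) : Prop :=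
  ∀ z : m → ℝ, z ⬝ᵥ (M *ᵥ z) ≤ 0

private lemma dot_transpose_mulVec {m k : ℕ} (M : Matrix (Fin m) (Fin k) ℝ)
    (a : Fin k → ℝ) (b : Fin m → ℝ) : a ⬝ᵥ (Mᵀ *ᵥ b) = (M *ᵥ a) ⬝ᵥ b := by
  rw [Matrix.dotProduct_mulVec, Matrix.vecMul_transpose]

private lemma dot_symm_mulVec {m : ℕ} {M : Matrix (Fin m) (Fin m) ℝ} (hM : Mᵀ = M)
    (a b : Fin m → ℝ) : a ⬝ᵥ (M *ᵥ b) = b ⬝ᵥ (M *ᵥ a) := by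
  conv_lhs => rw [← hM]
  rw [dot_transpose_mulVec, dotProduct_comm]

/-- negative feedback interconnection of a passive system through a
positive semidefinite coupling preserves the dissipation inequality. -/
theorem stmt3 {n pb pc : ℕ}
    (Ab : Matrix (Fin n) (Fin n) ℝ) (Bb : Matrix (Fin n) (Fin pb) ℝ)
    (Cb : Matrix (Fin pb) (Fin n) ℝ) (Db : Matrix (Fin pb) (Fin pb) ℝ)
    (Ξ : Matrix (Fin n) (Fin n) ℝ) (hΞ : Ξ.PosDef)
    (hLMI : NegSemidef
      (fromBlocks (Abᵀ * Ξ + Ξ * Ab) (Ξ * Bb - Cbᵀ) (Bbᵀ * Ξ - Cb) (-(Db + Dbᵀ))))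
    (S : Matrix (Fin pb) (Fin pb) ℝ) (hS : S.PosSemidef)
    (hDS : IsUnit (1 + Db * S)) (hSD : IsUnit (1 + S * Db))
    (𝓑 : Matrix (Fin pb) (Fin pc) ℝ)
    (Ac : Matrix (Fin n) (Fin n) ℝ) (Bc : Matrix (Fin n) (Fin pc) ℝ)
    (Cc : Matrix (Fin pc) (Fin n) ℝ) (Dc : Matrix (Fin pc) (Fin pc) ℝ)
    (hAc : Ac = Ab - Bb * (1 + S * Db)⁻¹ * S * Cb)
    (hBc : Bc = Bb * (1 + S * Db)⁻¹ * 𝓑)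
    (hCc : Cc = 𝓑ᵀ * (1 + Db * S)⁻¹ * Cb)
    (hDc : Dc = 𝓑ᵀ * Db * (1 + S * Db)⁻¹ * 𝓑) :
    ∀ (x : Fin n → ℝ) (uc : Fin pc → ℝ),
      2 * (x ⬝ᵥ (Ξ *ᵥ (Ac *ᵥ x + Bc *ᵥ uc))) ≤ 2 * ((Cc *ᵥ x + Dc *ᵥ uc) ⬝ᵥ uc) := by
  intro x uc
  have hdSD : IsUnit (1 + S * Db).det := (Matrix.isUnit_iff_isUnit_det _).mp hSD
  have hdDS : IsUnit (1 + Db * S).det := (Matrix.isUnit_iff_isUnit_det _).mp hDS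
  have hE : (1 + S * Db) * (1 + S * Db)⁻¹ = 1 := Matrix.mul_nonsing_inv _ hdSD
  have hE' : (1 + S * Db)⁻¹ * (1 + S * Db) = 1 := Matrix.nonsing_inv_mul _ hdSD
  have hF : (1 + Db * S) * (1 + Db * S)⁻¹ = 1 := Matrix.mul_nonsing_inv _ hdDS
  have hF' : (1 + Db * S)⁻¹ * (1 + Db * S) = 1 := Matrix.nonsing_inv_mul _ hdDS
  -- key matrix commutation: Db * (1+S*Db)⁻¹ = (1+Db*S)⁻¹ * Db
  have hcomm : Db * (1 + S * Db)⁻¹ = (1 + Db * S)⁻¹ * Db := by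
    have h1 : (1 + Db * S) * (Db * (1 + S * Db)⁻¹) = Db := by
      rw [← Matrix.mul_assoc]
      have h2 : (1 + Db * S) * Db = Db * (1 + S * Db) := by noncomm_ring
      rw [h2, Matrix.mul_assoc, hE, Matrix.mul_one]
    calc Db * (1 + S * Db)⁻¹
        = ((1 + Db * S)⁻¹ * (1 + Db * S)) * (Db * (1 + S * Db)⁻¹) := by
          rw [hF', Matrix.one_mul]
      _ = (1 + Db * S)⁻¹ * ((1 + Db * S) * (Db * (1 + S * Db)⁻¹)) := by
          rw [Matrix.mul_assoc]
      _ = (1 + Db * S)⁻¹ * Db := by rw [h1]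
  set vb : Fin pb → ℝ := (1 + S * Db)⁻¹ *ᵥ (𝓑 *ᵥ uc - S *ᵥ (Cb *ᵥ x)) with hvb
  set zb : Fin pb → ℝ := Cb *ᵥ x + Db *ᵥ vb with hzb
  have hΞt : Ξᵀ = Ξ := by
    have := hΞ.1.eq
    simpa using this
  -- vb satisfies vb = 𝓑 uc - S zb
  have hvb2 : vb = 𝓑 *ᵥ uc - S *ᵥ zb := by
    have h0 : (1 + S * Db) *ᵥ vb = 𝓑 *ᵥ uc - S *ᵥ (Cb *ᵥ x) := by
      rw [hvb, Matrix.mulVec_mulVec, hE, Matrix.one_mulVec]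
    have h1 : vb + S *ᵥ (Db *ᵥ vb) = 𝓑 *ᵥ uc - S *ᵥ (Cb *ᵥ x) := by
      rw [← h0, Matrix.add_mulVec, Matrix.one_mulVec, ← Matrix.mulVec_mulVec]
    rw [hzb, Matrix.mulVec_add, eq_sub_iff_add_eq]
    have h2 : vb + (S *ᵥ (Cb *ᵥ x) + S *ᵥ (Db *ᵥ vb))
        = (vb + S *ᵥ (Db *ᵥ vb)) + S *ᵥ (Cb *ᵥ x) := by abel
    rw [h2, h1]
    abel
  -- dynamics identity
  have hA : Ac *ᵥ x + Bc *ᵥ uc = Ab *ᵥ x + Bb *ᵥ vb := by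
    rw [hAc, hBc, hvb, Matrix.sub_mulVec]
    simp only [← Matrix.mulVec_mulVec, Matrix.mulVec_sub]
    abel
  -- zb in closed form
  have hSz : S *ᵥ zb = 𝓑 *ᵥ uc - vb := by rw [hvb2]; abel
  have hzb2 : zb = (1 + Db * S)⁻¹ *ᵥ (Cb *ᵥ x + Db *ᵥ (𝓑 *ᵥ uc)) := by
    have h0 : (1 + Db * S) *ᵥ zb = Cb *ᵥ x + Db *ᵥ (𝓑 *ᵥ uc) := by
      rw [Matrix.add_mulVec, Matrix.one_mulVec, ← Matrix.mulVec_mulVec, hSz]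
      rw [hzb, Matrix.mulVec_sub]
      abel
    rw [← h0, Matrix.mulVec_mulVec, hF', Matrix.one_mulVec]
  -- output identity
  have hC : Cc *ᵥ x + Dc *ᵥ uc = 𝓑ᵀ *ᵥ zb := by
    have hDc' : 𝓑ᵀ * Db * (1 + S * Db)⁻¹ * 𝓑 = 𝓑ᵀ * ((1 + Db * S)⁻¹ * Db) * 𝓑 := by
      rw [Matrix.mul_assoc 𝓑ᵀ Db ((1 + S * Db)⁻¹), hcomm]
    rw [hCc, hDc, hDc', hzb2]
    simp only [← Matrix.mulVec_mulVec, Matrix.mulVec_add]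
  -- apply the LMI to (x, vb)
  have hQ := hLMI (Sum.elim x vb)
  rw [Matrix.fromBlocks_mulVec, sumElim_dotProduct_sumElim] at hQ
  simp only [Matrix.add_mulVec, Matrix.sub_mulVec, Matrix.neg_mulVec,
    ← Matrix.mulVec_mulVec, dotProduct_add, dotProduct_sub, dotProduct_neg,
    Sum.elim_comp_inl, Sum.elim_comp_inr] at hQ
  have e1 : x ⬝ᵥ (Abᵀ *ᵥ (Ξ *ᵥ x)) = x ⬝ᵥ (Ξ *ᵥ (Ab *ᵥ x)) := by
    rw [dot_transpose_mulVec, dot_symm_mulVec hΞt]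
  have e2 : vb ⬝ᵥ (Bbᵀ *ᵥ (Ξ *ᵥ x)) = x ⬝ᵥ (Ξ *ᵥ (Bb *ᵥ vb)) := by
    rw [dot_transpose_mulVec, dot_symm_mulVec hΞt]
  have e3 : x ⬝ᵥ (Cbᵀ *ᵥ vb) = vb ⬝ᵥ (Cb *ᵥ x) := by
    rw [dot_transpose_mulVec, dotProduct_comm]
  have e4 : vb ⬝ᵥ (Dbᵀ *ᵥ vb) = vb ⬝ᵥ (Db *ᵥ vb) := by
    rw [dot_transpose_mulVec, dotProduct_comm]
  rw [e1, e2, e3, e4] at hQ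
  -- assemble
  rw [hA, hC]
  have hLHS : x ⬝ᵥ (Ξ *ᵥ (Ab *ᵥ x + Bb *ᵥ vb))
      = x ⬝ᵥ (Ξ *ᵥ (Ab *ᵥ x)) + x ⬝ᵥ (Ξ *ᵥ (Bb *ᵥ vb)) := by
    rw [Matrix.mulVec_add, dotProduct_add]
  have hvz : vb ⬝ᵥ zb ≤ zb ⬝ᵥ (𝓑 *ᵥ uc) := by
    have hSzz : 0 ≤ zb ⬝ᵥ (S *ᵥ zb) := by
      have := hS.dotProduct_mulVec_nonneg zb
      simpa using this
    rw [hvb2, dotProduct_comm, dotProduct_sub]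
    linarith
  have hRHS : (𝓑ᵀ *ᵥ zb) ⬝ᵥ uc = zb ⬝ᵥ (𝓑 *ᵥ uc) := by
    rw [dotProduct_comm, dot_transpose_mulVec, dotProduct_comm]
  have hzv : vb ⬝ᵥ (Cb *ᵥ x) + vb ⬝ᵥ (Db *ᵥ vb) = vb ⬝ᵥ zb := by
    rw [hzb, dotProduct_add]
  rw [hLHS, hRHS]
  linarith
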